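/- The map U ↦ S(UρU*‖σ) on the unitary group of ℂ^d (σ positive definite) has image equal to the closed interval [H(λ↓(ρ)‖λ↓(σ)), H(λ↓(ρ)‖λ↑(σ))]. -/

import Mathlib

open Matrix ComplexOrder

/-- Classical relative entropy with convention `0 * log 0 = 0` (automatic since
`Real.log 0 = 0`). -/
noncomputable def relEnt {d : ℕ} (p q : Fin d → ℝ) : ℝ :=
  ∑ i, p i * (Real.log (p i) - Real.log (q i))

/-- Non-decreasing rearrangement `p↑`. -/
noncomputable def sortAsc {d : ℕ} (p : Fin d → ℝ) : Fin d → ℝ :=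
  p ∘ Tuple.sort p

/-- Non-increasing rearrangement `p↓`. -/
noncomputable def sortDesc {d : ℕ} (p : Fin d → ℝ) : Fin d → ℝ :=
  (p ∘ Tuple.sort p) ∘ Fin.rev
/-- Matrix logarithm of a Hermitian matrix via its spectral decomposition
(junk value `0` on non-Hermitian matrices). -/
noncomputable def matLog {n : Type*} [Fintype n] [DecidableEq n]
    (A : Matrix n n ℂ) : Matrix n n ℂ :=
  if h : A.IsHermitian then
    (h.eigenvectorUnitary : Matrix n n ℂ) *
      Matrix.diagonal (fun i => (Real.log (h.eigenvalues i) : ℂ)) *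
      (star h.eigenvectorUnitary : Matrix n n ℂ)
  else 0

/-- Eigenvalue vector of a Hermitian matrix (junk value `0` otherwise). -/
noncomputable def evals {n : Type*} [Fintype n] [DecidableEq n]
    (A : Matrix n n ℂ) : n → ℝ :=
  if h : A.IsHermitian then h.eigenvalues else 0

/-- Quantum relative entropy `S(ρ‖σ) = Tr (ρ (log ρ − log σ))`. -/
noncomputable def qRelEnt {n : Type*} [Fintype n] [DecidableEq n]
    (ρ σ : Matrix n n ℂ) : ℝ :=
  ((ρ * (matLog ρ - matLog σ)).trace).re

/-- von Neumann entropy `S(ρ) = −Tr (ρ log ρ)`. -/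
noncomputable def vnEnt {n : Type*} [Fintype n] [DecidableEq n]
    (ρ : Matrix n n ℂ) : ℝ :=
  -((ρ * matLog ρ).trace).re

/-- Partial trace over the second (B) factor. -/
noncomputable def ptraceB {a b : ℕ}
    (ρ : Matrix (Fin a × Fin b) (Fin a × Fin b) ℂ) : Matrix (Fin a) (Fin a) ℂ :=
  fun i j => ∑ k, ρ (i, k) (j, k)

/-- Partial trace over the first (A) factor. -/
noncomputable def ptraceA {a b : ℕ}
    (ρ : Matrix (Fin a × Fin b) (Fin a × Fin b) ℂ) : Matrix (Fin b) (Fin b) ℂ :=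
  fun i j => ∑ k, ρ (k, i) (k, j)

/-- Eigenvalues of a matrix on a bipartite space, reindexed by `Fin (a*b)`. -/
noncomputable def evalsP {a b : ℕ}
    (ρ : Matrix (Fin a × Fin b) (Fin a × Fin b) ℂ) : Fin (a * b) → ℝ :=
  evals ρ ∘ finProdFinEquiv.symm

variable {d : ℕ}

lemma matLog_eq_cfc {A : Matrix (Fin d) (Fin d) ℂ} (hA : A.IsHermitian) :
    matLog A = cfc Real.log A := by
  rw [hA.cfc_eq, matLog, dif_pos hA]
  rfl

/-- Conjugation by a unitary as a star algebra homomorphism. -/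
noncomputable def conjSAH (U : Matrix.unitaryGroup (Fin d) ℂ) :
    Matrix (Fin d) (Fin d) ℂ →⋆ₐ[ℂ] Matrix (Fin d) (Fin d) ℂ where
  toFun X := (U : Matrix (Fin d) (Fin d) ℂ) * X * (star U : Matrix (Fin d) (Fin d) ℂ)
  map_one' := by
    simpa using Matrix.mem_unitaryGroup_iff.mp U.2
  map_mul' X Y := by
    have h : (star U : Matrix (Fin d) (Fin d) ℂ) * U = 1 :=
      Matrix.mem_unitaryGroup_iff'.mp U.2
    simp only [Matrix.mul_assoc]
    rw [← Matrix.mul_assoc (star U : Matrix (Fin d) (Fin d) ℂ), h, Matrix.one_mul]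
  map_zero' := by simp
  map_add' X Y := by noncomm_ring
  commutes' c := by
    simp [Algebra.algebraMap_eq_smul_one, Matrix.mul_smul, Matrix.smul_mul,
      Matrix.mem_unitaryGroup_iff.mp U.2]
  map_star' X := by
    simp only [StarMul.star_mul, star_star]
    rw [Matrix.mul_assoc]

lemma conjSAH_apply (U : Matrix.unitaryGroup (Fin d) ℂ) (X : Matrix (Fin d) (Fin d) ℂ) :
    conjSAH U X = (U : Matrix (Fin d) (Fin d) ℂ) * X * (star U : Matrix (Fin d) (Fin d) ℂ) := rfl

lemma isHermitian_conj {A : Matrix (Fin d) (Fin d) ℂ} (hA : A.IsHermitian)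
    (U : Matrix.unitaryGroup (Fin d) ℂ) :
    ((U : Matrix (Fin d) (Fin d) ℂ) * A * (star U : Matrix (Fin d) (Fin d) ℂ)).IsHermitian := by
  unfold Matrix.IsHermitian
  rw [← Matrix.star_eq_conjTranspose]
  simp only [StarMul.star_mul, star_star]
  rw [← Matrix.mul_assoc, Matrix.star_eq_conjTranspose, hA.eq, Matrix.mul_assoc]

lemma matLog_conj {A : Matrix (Fin d) (Fin d) ℂ} (hA : A.IsHermitian)
    (U : Matrix.unitaryGroup (Fin d) ℂ) :
    matLog ((U : Matrix (Fin d) (Fin d) ℂ) * A * (star U : Matrix (Fin d) (Fin d) ℂ)) =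
      (U : Matrix (Fin d) (Fin d) ℂ) * matLog A * (star U : Matrix (Fin d) (Fin d) ℂ) := by
  have hA' : IsSelfAdjoint A := hA
  have hUA : IsSelfAdjoint ((U : Matrix (Fin d) (Fin d) ℂ) * A * (star U : Matrix (Fin d) (Fin d) ℂ)) :=
    isHermitian_conj hA U
  have hd : DiscreteTopology (spectrum ℝ A) := by
    have : Finite (spectrum ℝ A) := A.finite_real_spectrum
    exact Finite.instDiscreteTopology
  have hf : ContinuousOn Real.log (spectrum ℝ A) := by
    rw [continuousOn_iff_continuous_restrict]
    exact continuous_of_discreteTopology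
  have hcont : Continuous (conjSAH U) := by
    show Continuous fun X : Matrix (Fin d) (Fin d) ℂ =>
      (U : Matrix (Fin d) (Fin d) ℂ) * X * (star U : Matrix (Fin d) (Fin d) ℂ)
    exact (continuous_const.matrix_mul continuous_id).matrix_mul continuous_const
  have := StarAlgHom.map_cfc (conjSAH U) Real.log A hf hcont hA' hUA
  rw [matLog_eq_cfc hA, matLog_eq_cfc (isHermitian_conj hA U)]
  have h2 : (conjSAH U) A = (U : Matrix (Fin d) (Fin d) ℂ) * A * (star U : Matrix (Fin d) (Fin d) ℂ) := rfl
  rw [← h2, ← this]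
  rfl

lemma trace_mul_matLog_self {A : Matrix (Fin d) (Fin d) ℂ} (hA : A.IsHermitian) :
    (A * matLog A).trace =
      ((∑ i, hA.eigenvalues i * Real.log (hA.eigenvalues i) : ℝ) : ℂ) := by
  set V : Matrix (Fin d) (Fin d) ℂ := (hA.eigenvectorUnitary : Matrix (Fin d) (Fin d) ℂ) with hVdef
  have hV : star V * V = 1 := Matrix.mem_unitaryGroup_iff'.mp hA.eigenvectorUnitary.2
  rw [matLog, dif_pos hA]
  nth_rewrite 1 [hA.spectral_theorem]
  rw [Unitary.conjStarAlgAut_apply]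
  set D := Matrix.diagonal ((RCLike.ofReal ∘ hA.eigenvalues : Fin d → ℂ)) with hD
  set L := Matrix.diagonal (fun i => (Real.log (hA.eigenvalues i) : ℂ)) with hL
  have key : (V * D * star V) * (V * L * star V) = V * (D * L) * star V := by
    simp only [Matrix.mul_assoc]
    rw [← Matrix.mul_assoc (star V) V, hV, Matrix.one_mul]
  rw [key, Matrix.trace_mul_cycle, ← Matrix.mul_assoc, hV, Matrix.one_mul]
  rw [hD, hL, Matrix.diagonal_mul_diagonal, Matrix.trace_diagonal]
  push_cast
  rfl

lemma trace_conj_matLog {ρ σ : Matrix (Fin d) (Fin d) ℂ} (hρ : ρ.IsHermitian)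
    (hσ : σ.IsHermitian) (U : Matrix.unitaryGroup (Fin d) ℂ) :
    ((U : Matrix (Fin d) (Fin d) ℂ) * ρ * (star U : Matrix (Fin d) (Fin d) ℂ) * matLog σ).trace =
      ((∑ i, ∑ j, hρ.eigenvalues i * Real.log (hσ.eigenvalues j) *
        Complex.normSq ((star (hσ.eigenvectorUnitary : Matrix (Fin d) (Fin d) ℂ) *
          (U : Matrix (Fin d) (Fin d) ℂ) *
          (hρ.eigenvectorUnitary : Matrix (Fin d) (Fin d) ℂ)) j i) : ℝ) : ℂ) := by
  set V : Matrix (Fin d) (Fin d) ℂ := (hρ.eigenvectorUnitary : Matrix (Fin d) (Fin d) ℂ) with hVdef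
  set W : Matrix (Fin d) (Fin d) ℂ := (hσ.eigenvectorUnitary : Matrix (Fin d) (Fin d) ℂ) with hWdef
  set N : Matrix (Fin d) (Fin d) ℂ := star W * (U : Matrix (Fin d) (Fin d) ℂ) * V with hNdef
  have hW : W * star W = 1 := Matrix.mem_unitaryGroup_iff.mp hσ.eigenvectorUnitary.2
  have hNs : star N = star V * (star U : Matrix (Fin d) (Fin d) ℂ) * W := by
    rw [hNdef]
    simp only [StarMul.star_mul, star_star, Matrix.mul_assoc]
  rw [matLog, dif_pos hσ]
  nth_rewrite 1 [hρ.spectral_theorem]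
  rw [Unitary.conjStarAlgAut_apply]
  set Dp := Matrix.diagonal ((RCLike.ofReal ∘ hρ.eigenvalues : Fin d → ℂ)) with hDp
  set Dc := Matrix.diagonal (fun i => (Real.log (hσ.eigenvalues i) : ℂ)) with hDc
  have key : ((U : Matrix (Fin d) (Fin d) ℂ) * (V * Dp * star V) *
        (star U : Matrix (Fin d) (Fin d) ℂ)) * (W * Dc * star W) =
      W * (N * Dp * star N * Dc) * star W := by
    rw [hNs, hNdef]
    simp only [Matrix.mul_assoc]
    rw [← Matrix.mul_assoc W (star W), hW, Matrix.one_mul]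
  have hW' : star W * W = 1 := Matrix.mem_unitaryGroup_iff'.mp hσ.eigenvectorUnitary.2
  rw [key, Matrix.trace_mul_cycle, ← Matrix.mul_assoc, ← Matrix.mul_assoc, hW', Matrix.one_mul]
  have tr_diag : (N * Dp * star N * Dc).trace = ∑ j, (N * Dp * star N) j j *
      (Real.log (hσ.eigenvalues j) : ℂ) := by
    simp [Matrix.trace, Matrix.diag, Matrix.mul_diagonal, hDc]
  rw [tr_diag]
  have entry : ∀ j, (N * Dp * star N) j j =
      ∑ i, ((hρ.eigenvalues i : ℝ) : ℂ) * (Complex.normSq (N j i) : ℂ) := by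
    intro j
    rw [Matrix.star_eq_conjTranspose, Matrix.mul_apply]
    refine Finset.sum_congr rfl fun i _ => ?_
    rw [Matrix.mul_diagonal, Matrix.conjTranspose_apply]
    have : ((RCLike.ofReal ∘ hρ.eigenvalues : Fin d → ℂ)) i = ((hρ.eigenvalues i : ℝ) : ℂ) := rfl
    rw [this, mul_comm (N j i) _, mul_assoc]
    rw [Matrix.star_eq_conjTranspose] at *
    norm_num [Complex.mul_conj]
  simp only [entry, Finset.sum_mul]
  push_cast
  rw [Finset.sum_comm]
  refine Finset.sum_congr rfl fun i _ => Finset.sum_congr rfl fun j _ => by ring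

lemma sortDesc_antitone (p : Fin d → ℝ) : Antitone (sortDesc p) :=
  (Tuple.monotone_sort p).comp_antitone fun _ _ h => Fin.rev_le_rev.mpr h

lemma sortAsc_monotone (p : Fin d → ℝ) : Monotone (sortAsc p) := Tuple.monotone_sort p

/-- the permutation realizing `sortDesc` -/
noncomputable def descPerm (p : Fin d → ℝ) : Equiv.Perm (Fin d) :=
  Fin.revPerm.trans (Tuple.sort p)

lemma sortDesc_eq (p : Fin d → ℝ) (k : Fin d) : sortDesc p k = p (descPerm p k) := rfl
lemma sortAsc_eq (p : Fin d → ℝ) (k : Fin d) : sortAsc p k = p (Tuple.sort p k) := rfl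

section bounds
variable (p q : Fin d → ℝ)

lemma antitone_log_sortDesc (hq : ∀ i, 0 < q i) : Antitone (fun k => Real.log (sortDesc q k)) := by
  intro i j hij
  have h1 : 0 < sortDesc q j := by rw [sortDesc_eq]; exact hq _
  exact Real.log_le_log h1 (sortDesc_antitone q hij)

lemma monotone_log_sortAsc (hq : ∀ i, 0 < q i) : Monotone (fun k => Real.log (sortAsc q k)) := by
  intro i j hij
  have h1 : 0 < sortAsc q i := by rw [sortAsc_eq]; exact hq _
  exact Real.log_le_log h1 (sortAsc_monotone q hij)

lemma monovary_ab (hq : ∀ i, 0 < q i) : Monovary (sortDesc p) (fun k => Real.log (sortDesc q k)) := by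
  intro i j h
  rcases le_or_gt i j with hij | hij
  · exact absurd (antitone_log_sortDesc q hq hij) (not_le.mpr h)
  · exact sortDesc_antitone p hij.le

lemma antivary_ab' (hq : ∀ i, 0 < q i) : Antivary (sortDesc p) (fun k => Real.log (sortAsc q k)) := by
  intro i j h
  rcases le_or_gt j i with hij | hij
  · exact absurd (monotone_log_sortAsc q hq hij) (not_le.mpr h)
  · exact sortDesc_antitone p hij.le

lemma perm_sum_le (hq : ∀ i, 0 < q i) (τ : Equiv.Perm (Fin d)) :
    ∑ i, p i * Real.log (q (τ i)) ≤ ∑ k, sortDesc p k * Real.log (sortDesc q k) := by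
  set α := descPerm p
  set β := descPerm q
  have h1 : ∑ i, p i * Real.log (q (τ i)) =
      ∑ k, sortDesc p k * Real.log (sortDesc q ((α.trans (τ.trans β.symm)) k)) := by
    rw [← Equiv.sum_comp α (fun i => p i * Real.log (q (τ i)))]
    refine Finset.sum_congr rfl fun k _ => ?_
    rw [sortDesc_eq, sortDesc_eq]
    simp [α, β]
  rw [h1]
  have := (monovary_ab p q hq).sum_smul_comp_perm_le_sum_smul
    (σ := α.trans (τ.trans β.symm))
  simpa [smul_eq_mul] using this

lemma perm_sum_ge (hq : ∀ i, 0 < q i) (τ : Equiv.Perm (Fin d)) :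
    ∑ k, sortDesc p k * Real.log (sortAsc q k) ≤ ∑ i, p i * Real.log (q (τ i)) := by
  set α := descPerm p
  set β := Tuple.sort q
  have h1 : ∑ i, p i * Real.log (q (τ i)) =
      ∑ k, sortDesc p k * Real.log (sortAsc q ((α.trans (τ.trans β.symm)) k)) := by
    rw [← Equiv.sum_comp α (fun i => p i * Real.log (q (τ i)))]
    refine Finset.sum_congr rfl fun k _ => ?_
    rw [sortDesc_eq, sortAsc_eq]
    simp [α, β]
  rw [h1]
  have := (antivary_ab' p q hq).sum_smul_le_sum_smul_comp_perm
    (σ := α.trans (τ.trans β.symm))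
  simpa [smul_eq_mul] using this

end bounds

lemma permMatrix_real_apply (τ : Equiv.Perm (Fin d)) (i j : Fin d) :
    τ.permMatrix ℝ i j = if τ i = j then 1 else 0 := by
  simp only [Equiv.Perm.permMatrix, PEquiv.toMatrix_apply, Equiv.toPEquiv_apply,
    Option.mem_def, Option.some_inj]

lemma perm_L_eq (p q : Fin d → ℝ) (τ : Equiv.Perm (Fin d)) :
    ∑ i, ∑ j, p i * Real.log (q j) * τ.permMatrix ℝ i j = ∑ i, p i * Real.log (q (τ i)) := by
  refine Finset.sum_congr rfl fun i _ => ?_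
  rw [Finset.sum_eq_single (τ i)]
  · rw [permMatrix_real_apply, if_pos rfl, mul_one]
  · intro j _ hj
    rw [permMatrix_real_apply, if_neg (Ne.symm hj), mul_zero]
  · simp

lemma ds_sum_bounds (p q : Fin d → ℝ) (hq : ∀ i, 0 < q i) {B : Matrix (Fin d) (Fin d) ℝ}
    (hB : B ∈ doublyStochastic ℝ (Fin d)) :
    ∑ k, sortDesc p k * Real.log (sortAsc q k) ≤ ∑ i, ∑ j, p i * Real.log (q j) * B i j ∧
    ∑ i, ∑ j, p i * Real.log (q j) * B i j ≤ ∑ k, sortDesc p k * Real.log (sortDesc q k) := by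
  obtain ⟨w, hw0, hw1, hw3⟩ := exists_eq_sum_perm_of_mem_doublyStochastic hB
  have hBij : ∀ i j, B i j = ∑ τ : Equiv.Perm (Fin d), w τ * τ.permMatrix ℝ i j := by
    intro i j
    rw [← hw3, Matrix.sum_apply]
    refine Finset.sum_congr rfl fun τ _ => ?_
    simp
  have hL : ∑ i, ∑ j, p i * Real.log (q j) * B i j =
      ∑ τ : Equiv.Perm (Fin d), w τ * ∑ i, p i * Real.log (q (τ i)) := by
    calc ∑ i, ∑ j, p i * Real.log (q j) * B i j
        = ∑ i, ∑ j, ∑ τ : Equiv.Perm (Fin d),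
            w τ * (p i * Real.log (q j) * τ.permMatrix ℝ i j) := by
          refine Finset.sum_congr rfl fun i _ => Finset.sum_congr rfl fun j _ => ?_
          rw [hBij, Finset.mul_sum]
          exact Finset.sum_congr rfl fun τ _ => by ring
      _ = ∑ i, ∑ τ : Equiv.Perm (Fin d), ∑ j,
            w τ * (p i * Real.log (q j) * τ.permMatrix ℝ i j) :=
          Finset.sum_congr rfl fun i _ => Finset.sum_comm
      _ = ∑ τ : Equiv.Perm (Fin d), ∑ i, ∑ j,
            w τ * (p i * Real.log (q j) * τ.permMatrix ℝ i j) := Finset.sum_comm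
      _ = ∑ τ : Equiv.Perm (Fin d), w τ * ∑ i, p i * Real.log (q (τ i)) := by
          refine Finset.sum_congr rfl fun τ _ => ?_
          rw [← perm_L_eq p q τ, Finset.mul_sum]
          exact Finset.sum_congr rfl fun i _ => by rw [Finset.mul_sum]
  constructor
  · rw [hL]
    calc ∑ k, sortDesc p k * Real.log (sortAsc q k)
        = ∑ τ : Equiv.Perm (Fin d), w τ * ∑ k, sortDesc p k * Real.log (sortAsc q k) := by
          rw [← Finset.sum_mul, hw1, one_mul]
      _ ≤ _ := Finset.sum_le_sum fun τ _ =>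
          mul_le_mul_of_nonneg_left (perm_sum_ge p q hq τ) (hw0 τ)
  · rw [hL]
    calc ∑ τ : Equiv.Perm (Fin d), w τ * ∑ i, p i * Real.log (q (τ i))
        ≤ ∑ τ : Equiv.Perm (Fin d), w τ * ∑ k, sortDesc p k * Real.log (sortDesc q k) :=
          Finset.sum_le_sum fun τ _ =>
            mul_le_mul_of_nonneg_left (perm_sum_le p q hq τ) (hw0 τ)
      _ = _ := by rw [← Finset.sum_mul, hw1, one_mul]

lemma permMatrixC_apply (τ : Equiv.Perm (Fin d)) (i j : Fin d) :
    τ.permMatrix ℂ i j = if τ i = j then 1 else 0 := by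
  simp only [Equiv.Perm.permMatrix, PEquiv.toMatrix_apply, Equiv.toPEquiv_apply,
    Option.mem_def, Option.some_inj]

lemma permMatrixC_mul (σ τ : Equiv.Perm (Fin d)) :
    (σ * τ).permMatrix ℂ = τ.permMatrix ℂ * σ.permMatrix ℂ := by
  show ((σ * τ).toPEquiv).toMatrix = _
  rw [show σ * τ = τ.trans σ from rfl, Equiv.toPEquiv_trans, PEquiv.toMatrix_trans]

noncomputable def rotMat (x y : Fin d) (c s : ℝ) : Matrix (Fin d) (Fin d) ℂ :=
  Matrix.of fun i j =>
    if i = x then (if j = x then (c : ℂ) else if j = y then (-s : ℂ) else 0)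
    else if i = y then (if j = x then (s : ℂ) else if j = y then (c : ℂ) else 0)
    else if i = j then 1 else 0

lemma rot_row_x {x y : Fin d} (hxy : x ≠ y) (c s : ℝ) (h : Fin d → ℂ) :
    ∑ k, rotMat x y c s x k * h k = (c : ℂ) * h x + (-s : ℂ) * h y := by
  have step : ∀ k, rotMat x y c s x k * h k =
      (if k = x then (c : ℂ) * h x else 0) + (if k = y then (-s : ℂ) * h y else 0) := by
    intro k
    by_cases hkx : k = x
    · subst hkx; simp [rotMat, hxy]
    · by_cases hky : k = y
      · subst hky; simp [rotMat, hxy, Ne.symm hxy]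
      · simp [rotMat, hkx, hky]
  rw [Finset.sum_congr rfl fun k _ => step k, Finset.sum_add_distrib]
  simp

lemma rot_row_y {x y : Fin d} (hxy : x ≠ y) (c s : ℝ) (h : Fin d → ℂ) :
    ∑ k, rotMat x y c s y k * h k = (s : ℂ) * h x + (c : ℂ) * h y := by
  have step : ∀ k, rotMat x y c s y k * h k =
      (if k = x then (s : ℂ) * h x else 0) + (if k = y then (c : ℂ) * h y else 0) := by
    intro k
    by_cases hkx : k = x
    · subst hkx; simp [rotMat, hxy, Ne.symm hxy]
    · by_cases hky : k = y
      · subst hky; simp [rotMat, hxy, Ne.symm hxy]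
      · simp [rotMat, hkx, hky, Ne.symm hxy]
  rw [Finset.sum_congr rfl fun k _ => step k, Finset.sum_add_distrib]
  simp

lemma rot_row_other {x y i : Fin d} (hix : i ≠ x) (hiy : i ≠ y) (c s : ℝ) (h : Fin d → ℂ) :
    ∑ k, rotMat x y c s i k * h k = h i := by
  have step : ∀ k, rotMat x y c s i k * h k = if k = i then h i else 0 := by
    intro k
    by_cases hki : k = i
    · subst hki; simp [rotMat, hix, hiy]
    · simp [rotMat, hix, hiy, hki, Ne.symm hki]
  rw [Finset.sum_congr rfl fun k _ => step k]
  simp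

lemma rotMat_mem_unitary {x y : Fin d} (hxy : x ≠ y) {c s : ℝ} (h : c ^ 2 + s ^ 2 = 1) :
    rotMat x y c s ∈ Matrix.unitaryGroup (Fin d) ℂ := by
  have hC : (c : ℂ) ^ 2 + (s : ℂ) ^ 2 = 1 := by exact_mod_cast congrArg Complex.ofReal h
  rw [Matrix.mem_unitaryGroup_iff]
  ext i j
  rw [Matrix.mul_apply]
  simp only [Matrix.star_apply]
  by_cases hix : i = x
  · subst hix
    rw [rot_row_x hxy c s (fun k => star (rotMat i y c s j k))]
    by_cases hjx : j = i
    · subst hjx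
      simp [rotMat, hxy, Ne.symm hxy, Matrix.one_apply, Complex.star_def, Complex.conj_ofReal,
        map_neg]
      linear_combination hC
    · by_cases hjy : j = y
      · subst hjy
        simp [rotMat, hxy, Ne.symm hxy, Matrix.one_apply, hjx, Complex.star_def,
          Complex.conj_ofReal, map_neg]
        ring
      · simp [rotMat, hjx, hjy, Matrix.one_apply, Ne.symm hjx]
  · by_cases hiy : i = y
    · subst hiy
      rw [rot_row_y hxy c s (fun k => star (rotMat x i c s j k))]
      by_cases hjx : j = x
      · subst hjx
        simp [rotMat, hxy, Ne.symm hxy, Matrix.one_apply, hix, Complex.star_def,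
          Complex.conj_ofReal, map_neg]
        ring
      · by_cases hjy : j = i
        · subst hjy
          simp [rotMat, hxy, Ne.symm hxy, hjx, Matrix.one_apply, Complex.star_def,
            Complex.conj_ofReal, map_neg]
          linear_combination hC
        · simp [rotMat, hjx, hjy, Matrix.one_apply, Ne.symm hjy]
    · rw [rot_row_other hix hiy c s (fun k => star (rotMat x y c s j k))]
      by_cases hjx : j = x
      · subst hjx
        simp [rotMat, hix, hiy, Matrix.one_apply, Ne.symm hix]
      · by_cases hjy : j = y
        · subst hjy
          simp [rotMat, hix, hiy, Matrix.one_apply, Ne.symm hiy]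
        · by_cases hji : j = i
          · subst hji
            simp [rotMat, hjx, hjy, Matrix.one_apply]
          · simp [rotMat, hjx, hjy, hji, Ne.symm hji, Matrix.one_apply]

lemma phase_unit (z : ℝ) :
    Complex.exp ((z : ℂ) * Complex.I) *
      (starRingEnd ℂ) (Complex.exp ((z : ℂ) * Complex.I)) = 1 := by
  rw [← Complex.exp_conj, ← Complex.exp_add,
    show (starRingEnd ℂ) ((z : ℂ) * Complex.I) = -((z : ℂ) * Complex.I) by
      rw [_root_.map_mul, Complex.conj_I, Complex.conj_ofReal]; ring,
    add_neg_cancel, Complex.exp_zero]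

noncomputable def phaseMat (y : Fin d) (t : ℝ) : Matrix (Fin d) (Fin d) ℂ :=
  Matrix.diagonal fun i => if i = y then Complex.exp (((Real.pi * t : ℝ) : ℂ) * Complex.I) else 1

lemma phaseMat_mem_unitary (y : Fin d) (t : ℝ) :
    phaseMat y t ∈ Matrix.unitaryGroup (Fin d) ℂ := by
  rw [Matrix.mem_unitaryGroup_iff, phaseMat, Matrix.star_eq_conjTranspose,
    Matrix.diagonal_conjTranspose, Matrix.diagonal_mul_diagonal]
  ext i j
  by_cases hij : i = j
  · subst hij
    rw [Matrix.diagonal_apply_eq, Matrix.one_apply_eq]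
    by_cases hiy : i = y
    · have := phase_unit (Real.pi * t)
      push_cast at this
      simpa [hiy] using this
    · simp [hiy]
  · simp [Matrix.diagonal_apply_ne _ hij, Matrix.one_apply_ne hij]

noncomputable def swapPath (x y : Fin d) (t : ℝ) : Matrix (Fin d) (Fin d) ℂ :=
  rotMat x y (Real.cos (Real.pi / 2 * t)) (Real.sin (Real.pi / 2 * t)) * phaseMat y t

lemma swapPath_mem_unitary {x y : Fin d} (hxy : x ≠ y) (t : ℝ) :
    swapPath x y t ∈ Matrix.unitaryGroup (Fin d) ℂ :=
  mul_mem (rotMat_mem_unitary hxy (by rw [Real.cos_sq_add_sin_sq])) (phaseMat_mem_unitary y t)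

lemma phaseMat_zero (y : Fin d) : phaseMat y 0 = 1 := by
  rw [phaseMat, ← Matrix.diagonal_one]
  congr 1
  funext i
  by_cases hiy : i = y <;> simp [hiy, Complex.exp_zero]

lemma rotMat_one_zero {x y : Fin d} (hxy : x ≠ y) : rotMat x y 1 0 = 1 := by
  ext i j
  simp only [rotMat, Matrix.of_apply, Matrix.one_apply]
  split_ifs <;> simp_all <;> norm_num

lemma swapPath_zero {x y : Fin d} (hxy : x ≠ y) : swapPath x y 0 = 1 := by
  rw [swapPath, phaseMat_zero, Matrix.mul_one, mul_zero, Real.cos_zero, Real.sin_zero,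
    rotMat_one_zero hxy]

lemma swapPath_one {x y : Fin d} (hxy : x ≠ y) :
    swapPath x y 1 = (Equiv.swap x y).permMatrix ℂ := by
  rw [swapPath]
  have hc : Real.cos (Real.pi / 2 * 1) = 0 := by rw [mul_one, Real.cos_pi_div_two]
  have hs : Real.sin (Real.pi / 2 * 1) = 1 := by rw [mul_one, Real.sin_pi_div_two]
  rw [hc, hs]
  have h1 : phaseMat y 1 = Matrix.diagonal fun i => if i = y then (-1 : ℂ) else 1 := by
    rw [phaseMat]
    refine congrArg Matrix.diagonal (funext fun i => ?_)
    by_cases hiy : i = y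
    · rw [if_pos hiy, if_pos hiy,
        show ((Real.pi * 1 : ℝ) : ℂ) * Complex.I = (Real.pi : ℂ) * Complex.I by
          push_cast; ring]
      exact Complex.exp_pi_mul_I
    · simp [hiy]
  rw [h1]
  ext i j
  rw [Matrix.mul_diagonal, permMatrixC_apply]
  simp only [rotMat, Matrix.of_apply]
  split_ifs <;> simp_all [Equiv.swap_apply_def] <;> norm_num

lemma swapPath_continuous (x y : Fin d) (i j : Fin d) :
    Continuous fun t => swapPath x y t i j := by
  have h1 : ∀ k l : Fin d, Continuous fun t =>
      rotMat x y (Real.cos (Real.pi / 2 * t)) (Real.sin (Real.pi / 2 * t)) k l := by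
    intro k l
    have hc : Continuous fun t : ℝ => ((Real.cos (Real.pi / 2 * t) : ℝ) : ℂ) :=
      Complex.continuous_ofReal.comp (Real.continuous_cos.comp (by continuity))
    have hs : Continuous fun t : ℝ => ((Real.sin (Real.pi / 2 * t) : ℝ) : ℂ) :=
      Complex.continuous_ofReal.comp (Real.continuous_sin.comp (by continuity))
    simp only [rotMat, Matrix.of_apply]
    split_ifs <;> first
      | exact hc
      | exact hs
      | exact hs.neg
      | exact continuous_const
  have h2 : ∀ k l : Fin d, Continuous fun t => phaseMat y t k l := by
    intro k l
    by_cases hkl : k = l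
    · subst hkl
      by_cases hky : k = y
      · simp only [phaseMat, Matrix.diagonal_apply_eq, if_pos hky]
        exact Complex.continuous_exp.comp
          ((Complex.continuous_ofReal.comp (continuous_const.mul continuous_id)).mul
            continuous_const)
      · simp only [phaseMat, Matrix.diagonal_apply_eq, if_neg hky]
        exact continuous_const
    · simp only [phaseMat, Matrix.diagonal_apply_ne _ hkl]
      exact continuous_const
  simp only [swapPath, Matrix.mul_apply]
  exact continuous_finset_sum _ fun k _ => (h1 i k).mul (h2 k j)

lemma exists_unitary_path (σ : Equiv.Perm (Fin d)) :
    ∃ Γ : ℝ → Matrix (Fin d) (Fin d) ℂ,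
      (∀ i j, Continuous fun t => Γ t i j) ∧
      (∀ t, Γ t ∈ Matrix.unitaryGroup (Fin d) ℂ) ∧
      Γ 0 = 1 ∧ Γ 1 = σ.permMatrix ℂ := by
  refine Equiv.Perm.swap_induction_on σ ?_ ?_
  · refine ⟨fun _ => 1, fun i j => continuous_const, fun t => Submonoid.one_mem _, rfl, ?_⟩
    rw [show (1 : Equiv.Perm (Fin d)).permMatrix ℂ = (1 : Matrix (Fin d) (Fin d) ℂ) by
      ext i j; rw [permMatrixC_apply, Matrix.one_apply]; rfl]
  · rintro f x y hxy ⟨Γf, hcont, hmem, h0, h1⟩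
    refine ⟨fun t => Γf t * swapPath x y t, ?_, ?_, ?_, ?_⟩
    · intro i j
      simp only [Matrix.mul_apply]
      exact continuous_finset_sum _ fun k _ =>
        (hcont i k).mul (swapPath_continuous x y k j)
    · exact fun t => mul_mem (hmem t) (swapPath_mem_unitary hxy t)
    · show Γf 0 * swapPath x y 0 = 1
      rw [h0, swapPath_zero hxy, Matrix.mul_one]
    · show Γf 1 * swapPath x y 1 = _
      rw [h1, swapPath_one hxy, ← permMatrixC_mul]


section Glue
variable {d : ℕ}

lemma conj_mul_conj (U : Matrix.unitaryGroup (Fin d) ℂ) (A B : Matrix (Fin d) (Fin d) ℂ) :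
    ((U : Matrix (Fin d) (Fin d) ℂ) * A * (star U : Matrix (Fin d) (Fin d) ℂ)) *
      ((U : Matrix (Fin d) (Fin d) ℂ) * B * (star U : Matrix (Fin d) (Fin d) ℂ)) =
    (U : Matrix (Fin d) (Fin d) ℂ) * (A * B) * (star U : Matrix (Fin d) (Fin d) ℂ) := by
  have h : (star U : Matrix (Fin d) (Fin d) ℂ) * (U : Matrix (Fin d) (Fin d) ℂ) = 1 :=
    Matrix.mem_unitaryGroup_iff'.mp U.2
  simp only [Matrix.mul_assoc]
  rw [← Matrix.mul_assoc (star U : Matrix (Fin d) (Fin d) ℂ) (U : Matrix (Fin d) (Fin d) ℂ),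
    h, Matrix.one_mul]

lemma trace_conj_eq (U : Matrix.unitaryGroup (Fin d) ℂ) (X : Matrix (Fin d) (Fin d) ℂ) :
    ((U : Matrix (Fin d) (Fin d) ℂ) * X * (star U : Matrix (Fin d) (Fin d) ℂ)).trace = X.trace := by
  rw [Matrix.trace_mul_cycle, Matrix.mem_unitaryGroup_iff'.mp U.2, Matrix.one_mul]

lemma sum_sortDesc_log_self (p : Fin d → ℝ) :
    ∑ k, sortDesc p k * Real.log (sortDesc p k) = ∑ i, p i * Real.log (p i) :=
  Equiv.sum_comp (descPerm p) fun i => p i * Real.log (p i)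

lemma relEnt_formula (p q : Fin d → ℝ) (r : Fin d → ℝ) :
    relEnt (sortDesc p) r =
      ∑ i, p i * Real.log (p i) - ∑ k, sortDesc p k * Real.log (r k) := by
  rw [relEnt, ← sum_sortDesc_log_self p, ← Finset.sum_sub_distrib]
  exact Finset.sum_congr rfl fun k _ => by ring

lemma att_desc (p q : Fin d → ℝ) :
    ∑ j, p (((descPerm q).symm.trans (descPerm p)) j) * Real.log (q j) =
      ∑ k, sortDesc p k * Real.log (sortDesc q k) := by
  rw [← Equiv.sum_comp (descPerm q)
    (fun j => p (((descPerm q).symm.trans (descPerm p)) j) * Real.log (q j))]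
  refine (Finset.sum_congr rfl fun k _ => ?_).symm
  rw [sortDesc_eq, sortDesc_eq]
  simp

lemma att_asc (p q : Fin d → ℝ) :
    ∑ j, p (((Tuple.sort q).symm.trans (descPerm p)) j) * Real.log (q j) =
      ∑ k, sortDesc p k * Real.log (sortAsc q k) := by
  rw [← Equiv.sum_comp (Tuple.sort q)
    (fun j => p (((Tuple.sort q).symm.trans (descPerm p)) j) * Real.log (q j))]
  refine (Finset.sum_congr rfl fun k _ => ?_).symm
  rw [sortDesc_eq, sortAsc_eq]
  simp

lemma L_perm_normSq (p q : Fin d → ℝ) (τ : Equiv.Perm (Fin d)) :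
    ∑ i, ∑ j, p i * Real.log (q j) * Complex.normSq ((τ.permMatrix ℂ) j i) =
      ∑ j, p (τ j) * Real.log (q j) := by
  rw [Finset.sum_comm]
  refine Finset.sum_congr rfl fun j _ => ?_
  rw [Finset.sum_eq_single (τ j)]
  · rw [permMatrixC_apply, if_pos rfl]
    simp
  · intro i _ hi
    rw [permMatrixC_apply, if_neg (fun h => hi h.symm)]
    simp
  · simp

lemma B_mem_ds {N : Matrix (Fin d) (Fin d) ℂ} (hN : N ∈ Matrix.unitaryGroup (Fin d) ℂ) :
    (Matrix.of fun i j => Complex.normSq (N j i)) ∈ doublyStochastic ℝ (Fin d) := by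
  rw [mem_doublyStochastic_iff_sum]
  refine ⟨fun i j => Complex.normSq_nonneg _, fun i => ?_, fun j => ?_⟩
  · have h : star N * N = 1 := Matrix.mem_unitaryGroup_iff'.mp hN
    have h2 : (star N * N) i i = 1 := by rw [h, Matrix.one_apply_eq]
    rw [Matrix.mul_apply] at h2
    have h3 : ∑ j, ((Complex.normSq (N j i) : ℝ) : ℂ) = 1 := by
      rw [← h2]
      refine Finset.sum_congr rfl fun j _ => ?_
      rw [Matrix.star_apply, Complex.normSq_eq_conj_mul_self, Complex.star_def]
    have h4 : ((∑ j, Complex.normSq (N j i) : ℝ) : ℂ) = ((1 : ℝ) : ℂ) := by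
      push_cast
      rw [h3]
    exact_mod_cast h4
  · have h : N * star N = 1 := Matrix.mem_unitaryGroup_iff.mp hN
    have h2 : (N * star N) j j = 1 := by rw [h, Matrix.one_apply_eq]
    rw [Matrix.mul_apply] at h2
    have h3 : ∑ i, ((Complex.normSq (N j i) : ℝ) : ℂ) = 1 := by
      rw [← h2]
      refine Finset.sum_congr rfl fun i _ => ?_
      rw [Matrix.star_apply, ← Complex.mul_conj, Complex.star_def]
    have h4 : ((∑ i, Complex.normSq (N j i) : ℝ) : ℂ) = ((1 : ℝ) : ℂ) := by
      push_cast
      rw [h3]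
    exact_mod_cast h4

end Glue


theorem stmt_19 {d : ℕ} (ρ σ : Matrix (Fin d) (Fin d) ℂ)
    (hρ : ρ.PosSemidef) (hρ1 : ρ.trace = 1)
    (hσ : σ.PosDef) (hσ1 : σ.trace = 1) :
    Set.range (fun U : Matrix.unitaryGroup (Fin d) ℂ =>
        qRelEnt ((U : Matrix (Fin d) (Fin d) ℂ) * ρ *
          ((U : Matrix (Fin d) (Fin d) ℂ))ᴴ) σ) =
      Set.Icc (relEnt (sortDesc (evals ρ)) (sortDesc (evals σ)))
        (relEnt (sortDesc (evals ρ)) (sortAsc (evals σ))) := by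
  have hρH : ρ.IsHermitian := hρ.1
  have hσH : σ.IsHermitian := hσ.1
  set p : Fin d → ℝ := hρH.eigenvalues with hp
  set q : Fin d → ℝ := hσH.eigenvalues with hq
  have hqpos : ∀ i, 0 < q i := fun i => hσ.eigenvalues_pos i
  have hevρ : evals ρ = p := by rw [evals, dif_pos hρH]
  have hevσ : evals σ = q := by rw [evals, dif_pos hσH]
  set V : Matrix (Fin d) (Fin d) ℂ := (hρH.eigenvectorUnitary : Matrix (Fin d) (Fin d) ℂ) with hV
  set W : Matrix (Fin d) (Fin d) ℂ := (hσH.eigenvectorUnitary : Matrix (Fin d) (Fin d) ℂ) with hW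
  set C : ℝ := ∑ i, p i * Real.log (p i) with hC
  set Mval : ℝ := ∑ k, sortDesc p k * Real.log (sortDesc q k) with hMval
  set mval : ℝ := ∑ k, sortDesc p k * Real.log (sortAsc q k) with hmval
  -- the main formula for the function
  have key1 : ∀ U : Matrix.unitaryGroup (Fin d) ℂ,
      qRelEnt ((U : Matrix (Fin d) (Fin d) ℂ) * ρ * ((U : Matrix (Fin d) (Fin d) ℂ))ᴴ) σ =
        C - ∑ i, ∑ j, p i * Real.log (q j) *
          Complex.normSq ((star W * (U : Matrix (Fin d) (Fin d) ℂ) * V) j i) := by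
    intro U
    have hstar : ((U : Matrix (Fin d) (Fin d) ℂ))ᴴ = (star U : Matrix (Fin d) (Fin d) ℂ) := rfl
    rw [qRelEnt, hstar, mul_sub, Matrix.trace_sub, Complex.sub_re]
    have t1 : (((U : Matrix (Fin d) (Fin d) ℂ) * ρ * (star U : Matrix (Fin d) (Fin d) ℂ)) *
        matLog ((U : Matrix (Fin d) (Fin d) ℂ) * ρ * (star U : Matrix (Fin d) (Fin d) ℂ))).trace
        = ((C : ℝ) : ℂ) := by
      rw [matLog_conj hρH U, conj_mul_conj, trace_conj_eq, trace_mul_matLog_self hρH]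
    have t2 : (((U : Matrix (Fin d) (Fin d) ℂ) * ρ * (star U : Matrix (Fin d) (Fin d) ℂ)) *
        matLog σ).trace =
        ((∑ i, ∑ j, p i * Real.log (q j) *
          Complex.normSq ((star W * (U : Matrix (Fin d) (Fin d) ℂ) * V) j i) : ℝ) : ℂ) :=
      trace_conj_matLog hρH hσH U
    rw [t1, t2, Complex.ofReal_re, Complex.ofReal_re]
  -- bounds for arbitrary U
  have key2 : ∀ U : Matrix.unitaryGroup (Fin d) ℂ,
      mval ≤ (∑ i, ∑ j, p i * Real.log (q j) *
          Complex.normSq ((star W * (U : Matrix (Fin d) (Fin d) ℂ) * V) j i)) ∧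
      (∑ i, ∑ j, p i * Real.log (q j) *
          Complex.normSq ((star W * (U : Matrix (Fin d) (Fin d) ℂ) * V) j i)) ≤ Mval := by
    intro U
    have hNmem : star W * (U : Matrix (Fin d) (Fin d) ℂ) * V ∈ Matrix.unitaryGroup (Fin d) ℂ :=
      mul_mem (mul_mem (Unitary.star_mem hσH.eigenvectorUnitary.2) U.2)
        hρH.eigenvectorUnitary.2
    have := ds_sum_bounds p q hqpos (B_mem_ds hNmem)
    exact this
  -- rewrite the target interval
  rw [hevρ, hevσ, relEnt_formula p q (sortDesc q), relEnt_formula p q (sortAsc q),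
    ← hC, ← hMval, ← hmval]
  apply Set.eq_of_subset_of_subset
  · rintro y ⟨U, rfl⟩
    show qRelEnt ((U : Matrix (Fin d) (Fin d) ℂ) * ρ * ((U : Matrix (Fin d) (Fin d) ℂ))ᴴ) σ ∈
      Set.Icc (C - Mval) (C - mval)
    rw [key1 U]
    obtain ⟨hl, hr⟩ := key2 U
    exact ⟨by linarith, by linarith⟩
  · -- surjectivity via a path and IVT
    intro y hy
    set τmax : Equiv.Perm (Fin d) := (descPerm q).symm.trans (descPerm p) with hτmax
    set τmin : Equiv.Perm (Fin d) := (Tuple.sort q).symm.trans (descPerm p) with hτmin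
    obtain ⟨Γ0, hΓcont, hΓmem, hΓ0, hΓ1⟩ := exists_unitary_path (d := d) (τmin * τmax⁻¹)
    set P : Matrix (Fin d) (Fin d) ℂ := τmax.permMatrix ℂ with hP
    have hPmem : P ∈ Matrix.unitaryGroup (Fin d) ℂ := by
      obtain ⟨Γ', _, hmem', _, h1'⟩ := exists_unitary_path (d := d) τmax
      rw [hP, ← h1']
      exact hmem' 1
    set Γ : ℝ → Matrix (Fin d) (Fin d) ℂ := fun t => P * Γ0 t with hΓ
    have hΓmem' : ∀ t, Γ t ∈ Matrix.unitaryGroup (Fin d) ℂ := fun t => mul_mem hPmem (hΓmem t)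
    have hΓzero : Γ 0 = P := by rw [hΓ]; simp only [hΓ0, Matrix.mul_one]
    have hΓone : Γ 1 = τmin.permMatrix ℂ := by
      rw [hΓ]
      simp only [hΓ1]
      rw [hP, ← permMatrixC_mul, inv_mul_cancel_right]
    set h : ℝ → ℝ := fun t => C - ∑ i, ∑ j, p i * Real.log (q j) *
        Complex.normSq ((Γ t) j i) with hh
    have hcont : Continuous h := by
      apply continuous_const.sub
      apply continuous_finset_sum
      intro i _
      apply continuous_finset_sum
      intro j _
      apply continuous_const.mul
      apply Complex.continuous_normSq.comp
      have : ∀ t, (Γ t) j i = ∑ k, P j k * Γ0 t k i := fun t => Matrix.mul_apply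
      simp only [this]
      exact continuous_finset_sum _ fun k _ => continuous_const.mul (hΓcont k i)
    have hzero : h 0 = C - Mval := by
      rw [hh]
      simp only [hΓzero, hP]
      rw [L_perm_normSq p q τmax, hτmax, att_desc p q, hMval]
    have hone : h 1 = C - mval := by
      rw [hh]
      simp only [hΓone]
      rw [L_perm_normSq p q τmin, hτmin, att_asc p q, hmval]
    have hy' : y ∈ Set.Icc (h 0) (h 1) := by rw [hzero, hone]; exact hy
    obtain ⟨t, _, hty⟩ := intermediate_value_Icc (by norm_num : (0:ℝ) ≤ 1)
      hcont.continuousOn hy'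
    -- build the unitary
    have hUmem : W * Γ t * star V ∈ Matrix.unitaryGroup (Fin d) ℂ :=
      mul_mem (mul_mem hσH.eigenvectorUnitary.2 (hΓmem' t))
        (Unitary.star_mem hρH.eigenvectorUnitary.2)
    refine ⟨⟨W * Γ t * star V, hUmem⟩, ?_⟩
    have hN : star W * (W * Γ t * star V) * V = Γ t := by
      have h1 : star W * W = 1 := Matrix.mem_unitaryGroup_iff'.mp hσH.eigenvectorUnitary.2
      have h2 : star V * V = 1 := Matrix.mem_unitaryGroup_iff'.mp hρH.eigenvectorUnitary.2
      calc star W * (W * Γ t * star V) * V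
          = (star W * W) * Γ t * (star V * V) := by
            simp only [Matrix.mul_assoc]
        _ = Γ t := by rw [h1, h2, Matrix.one_mul, Matrix.mul_one]
    have hkey : qRelEnt ((W * Γ t * star V) * ρ * (W * Γ t * star V)ᴴ) σ =
        C - ∑ i, ∑ j, p i * Real.log (q j) *
          Complex.normSq ((star W * (W * Γ t * star V) * V) j i) :=
      key1 ⟨W * Γ t * star V, hUmem⟩
    rw [hN] at hkey
    show qRelEnt ((W * Γ t * star V) * ρ * (W * Γ t * star V)ᴴ) σ = y
    rw [hkey]
    exact hty
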